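/- There exist 37 points p₁, …, p₃₇ in the unit square [0,1]² ⊆ ℝ² with ‖pᵢ − pⱼ‖ ≥ 0.196 for all i ≠ j, such that the configuration {p₁, …, p₃₇} is invariant as a set under the reflection (x, y) ↦ (1 − x, y) of the unit square. -/

import Mathlib

/-- Reflection of the unit square across the vertical line `x = 1/2`:
`(x, y) ↦ (1 - x, y)`. -/
noncomputable def squareReflection (x : EuclideanSpace ℝ (Fin 2)) :
    EuclideanSpace ℝ (Fin 2) :=
  (WithLp.equiv 2 (Fin 2 → ℝ)).symm ![1 - x 0, x 1]

namespace Packing37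

/-- Integer coordinates (scaled by `10^9`) of the 37 points. -/
def X : Fin 37 → ℤ × ℤ :=
  ![(3149, 71888372),
   (182809849, 11911),
   (379241503, 2545),
   (620758497, 2545),
   (817190151, 11911),
   (999996851, 71888372),
   (281039443, 170110741),
   (500000000, 154938278),
   (718960557, 170110741),
   (11358, 268326015),
   (182815085, 340219776),
   (401781998, 325041836),
   (598218002, 325041836),
   (817184915, 340219776),
   (999988642, 268326015),
   (29423713, 463587005),
   (303563577, 495153145),
   (500000000, 495158333),
   (696436423, 495153145),
   (970576287, 463587005),
   (7108, 657949750),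
   (196425771, 659780894),
   (401775814, 665255524),
   (598224186, 665255524),
   (803574229, 659780894),
   (999992892, 657949750),
   (97004104, 829181693),
   (294640266, 829888995),
   (500000000, 835356752),
   (705359734, 829888995),
   (902995896, 829181693),
   (6329, 999982784),
   (196429374, 999998934),
   (392878216, 999994912),
   (607121784, 999994912),
   (803570626, 999998934),
   (999993671, 999982784)]

/-- The actual points in the Euclidean plane. -/
noncomputable def pconf (i : Fin 37) : EuclideanSpace ℝ (Fin 2) :=
  (WithLp.equiv 2 (Fin 2 → ℝ)).symm ![((X i).1 : ℝ) / 10^9, ((X i).2 : ℝ) / 10^9]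

lemma dist_int : ∀ i j : Fin 37, i ≠ j →
    (196000000:ℤ)^2 ≤ ((X i).1 - (X j).1)^2 + ((X i).2 - (X j).2)^2 := by decide

lemma bnd_int : ∀ i : Fin 37,
    0 ≤ (X i).1 ∧ (X i).1 ≤ 10^9 ∧ 0 ≤ (X i).2 ∧ (X i).2 ≤ 10^9 := by decide

lemma sym_int : ∀ i : Fin 37, ∃ j : Fin 37, X j = (10^9 - (X i).1, (X i).2) := by decide

lemma pconf_apply0 (i : Fin 37) : pconf i 0 = ((X i).1 : ℝ) / 10^9 := rfl
lemma pconf_apply1 (i : Fin 37) : pconf i 1 = ((X i).2 : ℝ) / 10^9 := rfl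

lemma mem01 (n : ℤ) (h0 : 0 ≤ n) (h1 : n ≤ 10^9) :
    ((n:ℝ)/10^9) ∈ Set.Icc (0:ℝ) 1 := by
  constructor
  · positivity
  · rw [div_le_one (by norm_num)]; exact_mod_cast h1

lemma aux_sqrt (a b : ℤ) (h : (196000000:ℤ)^2 ≤ a^2 + b^2) :
    (0.196:ℝ) ≤ Real.sqrt (((a:ℝ)/10^9)^2 + ((b:ℝ)/10^9)^2) := by
  rw [div_pow, div_pow, ← add_div, Real.le_sqrt' (by norm_num),
    le_div_iff₀ (by positivity)]
  have hc : ((196000000:ℝ))^2 ≤ (a:ℝ)^2 + (b:ℝ)^2 := by exact_mod_cast h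
  norm_num at hc ⊢
  linarith

lemma refl_invol (x : EuclideanSpace ℝ (Fin 2)) :
    squareReflection (squareReflection x) = x := by
  unfold squareReflection
  ext t
  fin_cases t <;> simp

lemma refl_pconf (i j : Fin 37) (h : X j = (10^9 - (X i).1, (X i).2)) :
    squareReflection (pconf i) = pconf j := by
  have h1 : ((X j).1 : ℝ) = 10^9 - ((X i).1 : ℝ) := by rw [h]; push_cast; ring
  have h2 : ((X j).2 : ℝ) = ((X i).2 : ℝ) := by rw [h]
  unfold squareReflection pconf
  ext t
  fin_cases t <;> simp [h1, h2] <;> ring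

end Packing37

/-- There exist 37 points in the unit square `[0,1]²` with all pairwise
Euclidean distances at least 0.196, whose configuration is invariant as a set
under the reflection `(x, y) ↦ (1 - x, y)` (the improved packing of 37 disks
is mirror-symmetric). -/
theorem packing_37_disks_mirror_symmetric :
    ∃ p : Fin 37 → EuclideanSpace ℝ (Fin 2),
      (∀ i, ∀ t : Fin 2, p i t ∈ Set.Icc (0 : ℝ) 1) ∧
      (∀ i j, i ≠ j → (0.196 : ℝ) ≤ ‖p i - p j‖) ∧
      squareReflection '' Set.range p = Set.range p := by
  refine ⟨Packing37.pconf, ?_, ?_, ?_⟩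
  · intro i t
    obtain ⟨h0, h1, h2, h3⟩ := Packing37.bnd_int i
    fin_cases t
    · exact Packing37.pconf_apply0 i ▸ Packing37.mem01 _ h0 h1
    · exact Packing37.pconf_apply1 i ▸ Packing37.mem01 _ h2 h3
  · intro i j hij
    have h := Packing37.dist_int i j hij
    rw [EuclideanSpace.norm_eq]
    simp only [Fin.sum_univ_two, Real.norm_eq_abs, sq_abs, PiLp.sub_apply]
    have e0 : Packing37.pconf i 0 - Packing37.pconf j 0 =
        (((Packing37.X i).1 - (Packing37.X j).1 : ℤ):ℝ)/10^9 := by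
      rw [Packing37.pconf_apply0, Packing37.pconf_apply0]; push_cast; ring
    have e1 : Packing37.pconf i 1 - Packing37.pconf j 1 =
        (((Packing37.X i).2 - (Packing37.X j).2 : ℤ):ℝ)/10^9 := by
      rw [Packing37.pconf_apply1, Packing37.pconf_apply1]; push_cast; ring
    rw [e0, e1]
    exact Packing37.aux_sqrt _ _ h
  · have h1 : ∀ i, ∃ j, squareReflection (Packing37.pconf i) = Packing37.pconf j :=
      fun i => (Packing37.sym_int i).imp (fun j hj => Packing37.refl_pconf i j hj)
    apply Set.Subset.antisymm
    · rintro y ⟨x, ⟨i, rfl⟩, rfl⟩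
      obtain ⟨j, hj⟩ := h1 i
      exact ⟨j, hj.symm⟩
    · rintro y ⟨i, rfl⟩
      obtain ⟨j, hj⟩ := h1 i
      exact ⟨Packing37.pconf j, Set.mem_range_self j, by rw [← hj, Packing37.refl_invol]⟩
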